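/- arXiv:1601.00798 — 4 statements merged into one kernel-verified Lean document; each statement's English description precedes it below -/
import Mathlib

section
/- In the category of R-modules, Ext¹_R(Z_e, Z_o) and Ext¹_R(Z_o, Z_e) are both isomorphic to ℤ/2ℤ as abelian groups. -/
set_option maxHeartbeats 1000000


open Polynomial

noncomputable section

/-- The ring `R = ℤ[ξ]/(ξ²−1)`. -/
abbrev Runf : Type := ℤ[X] ⧸ Ideal.span {(X : ℤ[X]) ^ 2 - 1}

/-- The class of `ξ` in `R`. -/
def xi : Runf := Ideal.Quotient.mk _ X

/-- The ring homomorphism `eval₁ : R → ℤ` sending the class of `ξ` to `1`. -/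
def evalOne : Runf →+* ℤ :=
  Ideal.Quotient.lift _ (evalRingHom 1) (fun a ha => by
    obtain ⟨b, rfl⟩ := Ideal.mem_span_singleton.mp ha
    simp)

/-- The ring homomorphism `eval₋₁ : R → ℤ` sending the class of `ξ` to `-1`. -/
def evalNegOne : Runf →+* ℤ :=
  Ideal.Quotient.lift _ (evalRingHom (-1)) (fun a ha => by
    obtain ⟨b, rfl⟩ := Ideal.mem_span_singleton.mp ha
    simp)


/-- `Z_e`: the integers regarded as an `R`-module via `eval₁` (so `ξ` acts as `+1`). -/
def Ze : Type := ℤ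

/-- `Z_o`: the integers regarded as an `R`-module via `eval₋₁` (so `ξ` acts as `−1`). -/
def Zo : Type := ℤ

instance : AddCommGroup Ze := inferInstanceAs (AddCommGroup ℤ)
instance : AddCommGroup Zo := inferInstanceAs (AddCommGroup ℤ)

instance : Module Runf Ze := Module.compHom ℤ evalOne
instance : Module Runf Zo := Module.compHom ℤ evalNegOne
open CategoryTheory

/-! ### Auxiliary development -/

namespace Stmt8Aux

/-- `R` as a module over itself, as an object of `ModuleCat Runf`. -/
abbrev RR : ModuleCat Runf := ModuleCat.of Runf Runf

/-- shorthand for the quotient map -/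
abbrev qmk : ℤ[X] →+* Runf := Ideal.Quotient.mk (Ideal.span {(X : ℤ[X]) ^ 2 - 1})

lemma qmk_eq_zero_iff (p : ℤ[X]) :
    qmk p = 0 ↔ p ∈ Ideal.span {(X : ℤ[X]) ^ 2 - 1} :=
  Ideal.Quotient.eq_zero_iff_mem

lemma evalOne_qmk (p : ℤ[X]) : evalOne (qmk p) = p.eval 1 := rfl

lemma evalNegOne_qmk (p : ℤ[X]) : evalNegOne (qmk p) = p.eval (-1) := rfl

/-- Multiplication by `r` as a morphism in `ModuleCat Runf`. -/
def mulMap (r : Runf) : RR ⟶ RR := ModuleCat.ofHom (LinearMap.mulLeft Runf r)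

@[simp] lemma mulMap_apply (r x : Runf) : mulMap r x = r * x := rfl

lemma qmk_mul_eq_zero {f g : ℤ[X]} (h : f * g = (X : ℤ[X]) ^ 2 - 1) :
    qmk f * qmk g = 0 := by
  rw [← map_mul, qmk_eq_zero_iff, h]
  exact Ideal.subset_span rfl

lemma ker_sub_range_aux {f g : ℤ[X]} (hf : f ≠ 0) (h : f * g = (X : ℤ[X]) ^ 2 - 1)
    (x : Runf) (hx : qmk f * x = 0) : ∃ y : Runf, qmk g * y = x := by
  obtain ⟨p, rfl⟩ := Ideal.Quotient.mk_surjective x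
  rw [show Ideal.Quotient.mk _ p = qmk p from rfl] at hx ⊢
  rw [← map_mul, qmk_eq_zero_iff, Ideal.mem_span_singleton] at hx
  obtain ⟨q, hq⟩ := hx
  rw [← h, mul_assoc] at hq
  refine ⟨qmk q, ?_⟩
  rw [← map_mul, ← mul_left_cancel₀ hf hq]

/-- `ξ - 1` in `R`. -/
def aR : Runf := qmk (X - 1)
/-- `ξ + 1` in `R`. -/
def bR : Runf := qmk (X + 1)

lemma Xsub1 : (X - 1 : ℤ[X]) = X - C 1 := by simp
lemma Xadd1 : (X + 1 : ℤ[X]) = X - C (-1) := by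
  rw [map_neg, map_one, sub_neg_eq_add]

lemma Xsub1_ne : (X - 1 : ℤ[X]) ≠ 0 := by
  rw [Xsub1]; exact X_sub_C_ne_zero 1
lemma Xadd1_ne : (X + 1 : ℤ[X]) ≠ 0 := by
  rw [Xadd1]; exact X_sub_C_ne_zero (-1)

lemma mulab : (X - 1 : ℤ[X]) * (X + 1) = (X : ℤ[X]) ^ 2 - 1 := by ring
lemma mulba : (X + 1 : ℤ[X]) * (X - 1) = (X : ℤ[X]) ^ 2 - 1 := by ring

lemma aR_mul_bR : aR * bR = 0 := qmk_mul_eq_zero mulab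
lemma bR_mul_aR : bR * aR = 0 := qmk_mul_eq_zero mulba

lemma ker_a_sub_range_b (x : Runf) (hx : aR * x = 0) : ∃ y, bR * y = x :=
  ker_sub_range_aux Xsub1_ne mulab x hx
lemma ker_b_sub_range_a (x : Runf) (hx : bR * x = 0) : ∃ y, aR * y = x :=
  ker_sub_range_aux Xadd1_ne mulba x hx

/-! ### The periodic resolution -/

lemma mulMap_comp (r s : Runf) : mulMap s ≫ mulMap r = mulMap (r * s) := by
  show ModuleCat.ofHom ((LinearMap.mulLeft Runf r).comp (LinearMap.mulLeft Runf s)) = _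
  rw [← LinearMap.mulLeft_mul]
  rfl

lemma mulMap_zero : mulMap 0 = 0 := by
  rw [mulMap, LinearMap.mulLeft_zero_eq_zero]
  rfl

section Res

/-- The complex `⋯ → R → R → R` with differentials multiplication by `c n`. -/
def resC (c : ℕ → Runf) (hc : ∀ n, c n * c (n + 1) = 0) :
    ChainComplex (ModuleCat Runf) ℕ :=
  ChainComplex.of (fun _ => RR) (fun n => mulMap (c n)) (fun n => by
    rw [mulMap_comp, hc n, mulMap_zero])

@[simp] lemma resC_d (c : ℕ → Runf) (hc : ∀ n, c n * c (n + 1) = 0) (n : ℕ) :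
    (resC c hc).d (n + 1) n = mulMap (c n) :=
  ChainComplex.of_d (fun _ => RR) (fun n => mulMap (c n)) n

variable (c : ℕ → Runf) (hc : ∀ n, c n * c (n + 1) = 0)
  (M : Type) [AddCommGroup M] [Module Runf M] (pM : Runf →ₗ[Runf] M)
  (hp : ∀ x : Runf, pM (c 0 * x) = 0)

/-- The augmentation map to the single complex. -/
def resπ : resC c hc ⟶ (ChainComplex.single₀ (ModuleCat Runf)).obj (ModuleCat.of Runf M) :=
  ((resC c hc).toSingle₀Equiv _).symm ⟨ModuleCat.ofHom pM, by
    rw [show (1 : ℕ) = 0 + 1 from rfl, resC_d]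
    refine ModuleCat.hom_ext (LinearMap.ext fun x => ?_)
    exact hp x⟩

lemma resπ_f_zero : (resπ c hc M pM hp).f 0 = ModuleCat.ofHom pM :=
  ChainComplex.toSingle₀Equiv_symm_apply_f_zero _ _

/-- identity conversion from elements of `resC` objects to `Runf`. -/
def elX (n : ℕ) : ↥((resC c hc).X n) → Runf := fun x => x

/-- The projective resolution. -/
def resol (hex : ∀ n (x : Runf), c n * x = 0 → ∃ y, c (n + 1) * y = x)
    (hsurj : Function.Surjective pM)
    (hex0 : ∀ x : Runf, pM x = 0 → ∃ y, c 0 * y = x) :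
    ProjectiveResolution (ModuleCat.of Runf M) where
  complex := resC c hc
  projective n := ModuleCat.projective_of_free (Module.Basis.singleton PUnit.{1} Runf)
  π := resπ c hc M pM hp
  quasiIso := ⟨fun i => by
    cases i with
    | zero =>
      rw [ChainComplex.quasiIsoAt₀_iff, ShortComplex.quasiIso_iff_of_zeros']
      · constructor
        · rw [ShortComplex.moduleCat_exact_iff]
          intro x hx
          have hx1 : (resπ c hc M pM hp).f 0 x = 0 := hx
          rw [resπ_f_zero] at hx1
          have hx2 : pM (elX c hc 0 x) = 0 := hx1
          obtain ⟨y, hy⟩ := hex0 (elX c hc 0 x) hx2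
          exact ⟨y, hy⟩
        · rw [ModuleCat.epi_iff_surjective]
          intro m
          obtain ⟨y, hy⟩ := hsurj m
          refine ⟨y, ?_⟩
          show (resπ c hc M pM hp).f 0 y = m
          rw [resπ_f_zero]
          exact hy
      · exact (resC c hc).shape 0 0 (by simp)
      · simp
        rfl
      · simp
        rfl
    | succ n =>
      rw [quasiIsoAt_iff_exactAt' _ _ (ChainComplex.exactAt_succ_single_obj _ n)]
      rw [HomologicalComplex.exactAt_iff' _ (n + 2) (n + 1) n (by simp) (by simp)]
      rw [ShortComplex.moduleCat_exact_iff]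
      intro x hx
      rw [show (HomologicalComplex.sc' (resC c hc) (n + 2) (n + 1) n).g
          = (resC c hc).d (n + 1) n from rfl, resC_d] at hx
      have hx2 : c n * elX c hc (n + 1) x = 0 := hx
      obtain ⟨y, hy⟩ := hex n (elX c hc (n + 1) x) hx2
      refine ⟨y, ?_⟩
      have : (mulMap (c (n + 1))) y = x := hy
      rw [show (HomologicalComplex.sc' (resC c hc) (n + 2) (n + 1) n).f
          = (resC c hc).d (n + 2) (n + 1) from rfl,
        show (resC c hc).d (n + 2) (n + 1) = mulMap (c (n + 1)) from resC_d c hc (n + 1)]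
      exact this⟩

end Res

/-! ### `ZMod 2` as an `Runf`-module -/

instance : Module Runf (ZMod 2) :=
  Module.compHom (ZMod 2) ((Int.castRingHom (ZMod 2)).comp evalOne)

lemma zmod2_smul (r : Runf) (z : ZMod 2) :
    r • z = ((evalOne r : ℤ) : ZMod 2) * z := rfl

lemma parity (r : Runf) :
    ((evalNegOne r : ℤ) : ZMod 2) = ((evalOne r : ℤ) : ZMod 2) := by
  obtain ⟨p, rfl⟩ := Ideal.Quotient.mk_surjective r
  rw [show Ideal.Quotient.mk _ p = qmk p from rfl, evalOne_qmk, evalNegOne_qmk]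
  have h1 := eval_intCast_map (Int.castRingHom (ZMod 2)) p 1
  have h2 := eval_intCast_map (Int.castRingHom (ZMod 2)) p (-1)
  rw [eq_intCast] at h1 h2
  rw [Int.cast_id] at h1 h2
  rw [← h1, ← h2]
  congr 1

/-! ### Computation of the homology of the Hom-complex -/

section ExtComp

variable (c : ℕ → Runf) (hc : ∀ n, c n * c (n + 1) = 0)
variable (N : Type) [AddCommGroup N] [Module Runf N]

/-- The Hom cochain complex. -/
abbrev KY : CochainComplex (ModuleCat Runf) ℕ :=
  (resC c hc).linearYonedaObj Runf (ModuleCat.of Runf N)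

/-- The short complex whose homology is `Ext¹`. -/
abbrev SY : ShortComplex (ModuleCat Runf) := (KY c hc N).sc' 0 1 2

/-- identity conversion: elements of `(KY).X i` are morphisms. -/
def elH (i : ℕ) : ↥((KY c hc N).X i) → (RR ⟶ ModuleCat.of Runf N) := fun m => m

lemma hom_ext' (m m' : RR ⟶ ModuleCat.of Runf N)
    (h : m (1 : Runf) = m' (1 : Runf)) : m = m' := by
  have e : ∀ y : Runf, m y = m' y := by
    intro y
    calc m y = m (y • (1 : Runf)) := by rw [smul_eq_mul, mul_one]
      _ = y • m (1 : Runf) := map_smul m.hom y (1 : Runf)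
      _ = y • m' (1 : Runf) := by rw [h]
      _ = m' (y • (1 : Runf)) := (map_smul m'.hom y (1 : Runf)).symm
      _ = m' y := by rw [smul_eq_mul, mul_one]
  exact ModuleCat.hom_ext (LinearMap.ext e)

variable (eN : N ≃+ ℤ) (u : Runf →+* ℤ)

lemma hom_val (hu : ∀ (r : Runf) (v : N), eN (r • v) = u r * eN v)
    (m : RR ⟶ ModuleCat.of Runf N) (r : Runf) :
    eN (m r) = u r * eN (m (1 : Runf)) := by
  calc eN (m r) = eN (m (r • (1 : Runf))) := by rw [smul_eq_mul, mul_one]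
    _ = eN (r • m (1 : Runf)) := by rw [map_smul]
    _ = u r * eN (m (1 : Runf)) := hu _ _

lemma comp_val (r : Runf) (h : RR ⟶ ModuleCat.of Runf N) :
    (mulMap r ≫ h) (1 : Runf) = h r := by
  show h (mulMap r (1 : Runf)) = h r
  rw [mulMap_apply, mul_one]

lemma resC_d_one_zero : (resC c hc).d 1 0 = mulMap (c 0) := resC_d c hc 0

lemma resC_d_two_one : (resC c hc).d 2 1 = mulMap (c 1) := resC_d c hc 1

lemma Sf_elH (m : ↥((SY c hc N).X₁)) :
    elH c hc N 1 ((SY c hc N).f m) = mulMap (c 0) ≫ elH c hc N 0 m := by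
  rw [show (SY c hc N).f = (KY c hc N).d 0 1 from rfl, ChainComplex.linearYonedaObj_d,
    resC_d_one_zero]
  rfl

lemma SY_g_eq_zero (hu : ∀ (r : Runf) (v : N), eN (r • v) = u r * eN v)
    (hc1 : u (c 1) = 0) : (SY c hc N).g = 0 := by
  show (KY c hc N).d 1 2 = 0
  rw [ChainComplex.linearYonedaObj_d, resC_d_two_one]
  ext m : 2
  show (mulMap (c 1)) ≫ (elH c hc N 1 m) = (0 : RR ⟶ ModuleCat.of Runf N)
  apply hom_ext'
  rw [comp_val]
  apply eN.injective
  rw [hom_val N eN u hu, hc1, zero_mul]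
  show _ = eN ((0 : RR ⟶ ModuleCat.of Runf N).hom (1 : Runf))
  rw [ModuleCat.hom_zero, LinearMap.zero_apply, map_zero]

lemma SY_f_val (hu : ∀ (r : Runf) (v : N), eN (r • v) = u r * eN v)
    (t : ℤ) (hc0 : u (c 0) = t) (m : ↥((SY c hc N).X₁)) :
    eN ((elH c hc N 1 ((SY c hc N).f m)) (1 : Runf)) =
      t * eN ((elH c hc N 0 m) (1 : Runf)) := by
  rw [Sf_elH, comp_val, hom_val N eN u hu, hc0]

/-- The evaluation map from cycles to `ZMod 2`. -/
def Phi (hu : ∀ (r : Runf) (v : N), eN (r • v) = u r * eN v)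
    (hupar : ∀ r : Runf, ((u r : ℤ) : ZMod 2) = ((evalOne r : ℤ) : ZMod 2)) :
    ↥(LinearMap.ker (SY c hc N).g.hom) →ₗ[Runf] ZMod 2 where
  toFun x := ((eN ((elH c hc N 1 x.1) (1 : Runf)) : ℤ) : ZMod 2)
  map_add' x y := by
    show ((eN ((elH c hc N 1 (x.1 + y.1)) (1 : Runf)) : ℤ) : ZMod 2) = _
    rw [show elH c hc N 1 (x.1 + y.1) = elH c hc N 1 x.1 + elH c hc N 1 y.1 from rfl,
      show ∀ f g : RR ⟶ ModuleCat.of Runf N, (f + g) (1 : Runf) = f 1 + g 1 from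
        fun _ _ => rfl, map_add, Int.cast_add]
  map_smul' r x := by
    show ((eN ((elH c hc N 1 (r • x.1)) (1 : Runf)) : ℤ) : ZMod 2) =
      r • ((eN ((elH c hc N 1 x.1) (1 : Runf)) : ℤ) : ZMod 2)
    rw [show elH c hc N 1 (r • x.1) = r • elH c hc N 1 x.1 from rfl,
      show ∀ f : RR ⟶ ModuleCat.of Runf N, (r • f) (1 : Runf) = r • f 1 from
        fun _ => rfl, hu, Int.cast_mul, hupar, zmod2_smul]

variable (hu : ∀ (r : Runf) (v : N), eN (r • v) = u r * eN v)
  (hupar : ∀ r : Runf, ((u r : ℤ) : ZMod 2) = ((evalOne r : ℤ) : ZMod 2))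

lemma Phi_apply (x : ↥(LinearMap.ker (SY c hc N).g.hom)) :
    Phi c hc N eN u hu hupar x = ((eN ((elH c hc N 1 x.1) (1 : Runf)) : ℤ) : ZMod 2) := rfl

lemma mem_ker_SY_g (hu : ∀ (r : Runf) (v : N), eN (r • v) = u r * eN v)
    (hc1 : u (c 1) = 0) (m : ↥((SY c hc N).X₂)) :
    m ∈ LinearMap.ker (SY c hc N).g.hom := by
  rw [LinearMap.mem_ker, SY_g_eq_zero c hc N eN u hu hc1]
  rfl

/-- a morphism `RR ⟶ N` with prescribed value at `1`. -/
def msec (sec : Runf →ₗ[Runf] N) (n : ℤ) : RR ⟶ ModuleCat.of Runf N :=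
  mulMap (qmk (C n)) ≫ ModuleCat.ofHom sec

lemma msec_val (hu : ∀ (r : Runf) (v : N), eN (r • v) = u r * eN v)
    (huC : ∀ n : ℤ, u (qmk (C n)) = n)
    (sec : Runf →ₗ[Runf] N) (hsec : eN (sec 1) = 1) (n : ℤ) :
    eN ((msec N sec n) (1 : Runf)) = n := by
  rw [msec, comp_val]
  have : eN ((ModuleCat.ofHom sec) (qmk (C n))) =
      u (qmk (C n)) * eN ((ModuleCat.ofHom sec) (1 : Runf)) :=
    hom_val N eN u hu (ModuleCat.ofHom sec) (qmk (C n))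
  rw [this, huC]
  show n * eN (sec 1) = n
  rw [hsec, mul_one]

lemma Phi_surjective (hc1 : u (c 1) = 0) (huC : ∀ n : ℤ, u (qmk (C n)) = n)
    (sec : Runf →ₗ[Runf] N) (hsec : eN (sec 1) = 1) :
    Function.Surjective (Phi c hc N eN u hu hupar) := by
  intro z
  obtain ⟨n, rfl⟩ := ZMod.intCast_surjective z
  refine ⟨⟨msec N sec n, mem_ker_SY_g c hc N eN u hu hc1 _⟩, ?_⟩
  rw [Phi_apply]
  congr 1
  exact msec_val N eN u hu huC sec hsec n

lemma two_dvd_t (t : ℤ) (ht : t = 2 ∨ t = -2) : (2 : ℤ) ∣ t := by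
  rcases ht with rfl | rfl <;> decide

lemma Phi_ker (t : ℤ) (ht : t = 2 ∨ t = -2) (hc0 : u (c 0) = t)
    (huC : ∀ n : ℤ, u (qmk (C n)) = n)
    (sec : Runf →ₗ[Runf] N) (hsec : eN (sec 1) = 1) :
    LinearMap.ker (Phi c hc N eN u hu hupar) =
      LinearMap.range (SY c hc N).moduleCatToCycles := by
  ext x
  simp only [LinearMap.mem_ker, LinearMap.mem_range]
  rw [Phi_apply]
  constructor
  · intro hx
    rw [ZMod.intCast_zmod_eq_zero_iff_dvd] at hx
    obtain ⟨k, hk⟩ := hx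
    -- `eN (x 1) = 2 * k`
    set k' : ℤ := if t = 2 then k else -k with hk'
    have htk : t * k' = 2 * k := by
      rcases ht with h2 | h2 <;> simp [hk', h2]
    refine ⟨msec N sec k', ?_⟩
    apply Subtype.ext
    show (SY c hc N).f (msec N sec k') = x.1
    have : elH c hc N 1 ((SY c hc N).f (msec N sec k')) = elH c hc N 1 x.1 := by
      apply hom_ext'
      apply eN.injective
      rw [SY_f_val c hc N eN u hu t hc0 (msec N sec k')]
      have h0 : eN ((elH c hc N 0 (msec N sec k')) (1 : Runf)) = k' :=
        msec_val N eN u hu huC sec hsec k'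
      rw [h0, htk, hk]
      norm_num
    exact this
  · rintro ⟨m, rfl⟩
    show ((eN ((elH c hc N 1 ((SY c hc N).f m)) (1 : Runf)) : ℤ) : ZMod 2) = 0
    rw [SY_f_val c hc N eN u hu t hc0, ZMod.intCast_zmod_eq_zero_iff_dvd]
    exact Dvd.dvd.mul_right
      (by exact_mod_cast two_dvd_t t ht) _

/-- The homology of the Hom complex in degree 1, as `ZMod 2`. -/
def homologyEquiv (t : ℤ) (ht : t = 2 ∨ t = -2) (hc0 : u (c 0) = t) (hc1 : u (c 1) = 0)
    (huC : ∀ n : ℤ, u (qmk (C n)) = n)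
    (sec : Runf →ₗ[Runf] N) (hsec : eN (sec 1) = 1) :
    ((KY c hc N).homology 1) ≃+ ZMod 2 :=
  (((KY c hc N).homologyIsoSc' 0 1 2 (by simp) (by simp)) ≪≫
    (SY c hc N).moduleCatHomologyIso).toLinearEquiv.toAddEquiv.trans
    (((Submodule.quotEquivOfEq _ _
        (Phi_ker c hc N eN u hu hupar t ht hc0 huC sec hsec).symm).trans
      ((Phi c hc N eN u hu hupar).quotKerEquivOfSurjective
        (Phi_surjective c hc N eN u hu hupar hc1 huC sec hsec))).toAddEquiv)

end ExtComp

/-! ### Instantiations -/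

/-- Multiplier sequence for the resolution of `Ze`: `a, b, a, b, …`. -/
def cE : ℕ → Runf := fun n => if Even n then aR else bR
/-- Multiplier sequence for the resolution of `Zo`: `b, a, b, a, …`. -/
def cO : ℕ → Runf := fun n => if Even n then bR else aR

lemma cE_even {n : ℕ} (h : Even n) : cE n = aR := if_pos h
lemma cE_odd {n : ℕ} (h : ¬ Even n) : cE n = bR := if_neg h
lemma cO_even {n : ℕ} (h : Even n) : cO n = bR := if_pos h
lemma cO_odd {n : ℕ} (h : ¬ Even n) : cO n = aR := if_neg h

lemma hcE : ∀ n, cE n * cE (n + 1) = 0 := by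
  intro n
  rcases Nat.even_or_odd n with h | h
  · rw [cE_even h, cE_odd (by simpa [Nat.even_add_one] using h)]
    exact aR_mul_bR
  · rw [cE_odd (Nat.not_even_iff_odd.mpr h), cE_even (by simpa [Nat.even_add_one] using h)]
    exact bR_mul_aR

lemma hcO : ∀ n, cO n * cO (n + 1) = 0 := by
  intro n
  rcases Nat.even_or_odd n with h | h
  · rw [cO_even h, cO_odd (by simpa [Nat.even_add_one] using h)]
    exact bR_mul_aR
  · rw [cO_odd (Nat.not_even_iff_odd.mpr h), cO_even (by simpa [Nat.even_add_one] using h)]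
    exact aR_mul_bR

lemma hexE : ∀ n (x : Runf), cE n * x = 0 → ∃ y, cE (n + 1) * y = x := by
  intro n x hx
  rcases Nat.even_or_odd n with h | h
  · rw [cE_even h] at hx
    rw [cE_odd (by simpa [Nat.even_add_one] using h)]
    exact ker_a_sub_range_b x hx
  · rw [cE_odd (Nat.not_even_iff_odd.mpr h)] at hx
    rw [cE_even (by simpa [Nat.even_add_one] using h)]
    exact ker_b_sub_range_a x hx

lemma hexO : ∀ n (x : Runf), cO n * x = 0 → ∃ y, cO (n + 1) * y = x := by
  intro n x hx
  rcases Nat.even_or_odd n with h | h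
  · rw [cO_even h] at hx
    rw [cO_odd (by simpa [Nat.even_add_one] using h)]
    exact ker_b_sub_range_a x hx
  · rw [cO_odd (Nat.not_even_iff_odd.mpr h)] at hx
    rw [cO_even (by simpa [Nat.even_add_one] using h)]
    exact ker_a_sub_range_b x hx

/-- `Ze ≃+ ℤ`. -/
def eZe : Ze ≃+ ℤ := AddEquiv.refl ℤ
/-- `Zo ≃+ ℤ`. -/
def eZo : Zo ≃+ ℤ := AddEquiv.refl ℤ

lemma hu_Ze : ∀ (r : Runf) (v : Ze), eZe (r • v) = evalOne r * eZe v := fun _ _ => rfl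
lemma hu_Zo : ∀ (r : Runf) (v : Zo), eZo (r • v) = evalNegOne r * eZo v := fun _ _ => rfl

/-- The augmentation `R → Ze`. -/
def pZe : Runf →ₗ[Runf] Ze where
  toFun r := eZe.symm (evalOne r)
  map_add' a b := by simp
  map_smul' r x := by
    apply eZe.injective
    show evalOne (r • x) = eZe (r • eZe.symm (evalOne x))
    rw [hu_Ze, smul_eq_mul, map_mul, AddEquiv.apply_symm_apply]

/-- The augmentation `R → Zo`, also used as a section for the target module. -/
def pZo : Runf →ₗ[Runf] Zo where
  toFun r := eZo.symm (evalNegOne r)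
  map_add' a b := by simp
  map_smul' r x := by
    apply eZo.injective
    show evalNegOne (r • x) = eZo (r • eZo.symm (evalNegOne x))
    rw [hu_Zo, smul_eq_mul, map_mul, AddEquiv.apply_symm_apply]

lemma pZe_apply (r : Runf) : eZe (pZe r) = evalOne r := by
  show eZe (eZe.symm _) = _; rw [AddEquiv.apply_symm_apply]
lemma pZo_apply (r : Runf) : eZo (pZo r) = evalNegOne r := by
  show eZo (eZo.symm _) = _; rw [AddEquiv.apply_symm_apply]

lemma evalOne_aR : evalOne aR = 0 := by
  rw [aR, evalOne_qmk]; simp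
lemma evalOne_bR : evalOne bR = 2 := by
  rw [bR, evalOne_qmk]; simp
lemma evalNegOne_aR : evalNegOne aR = -2 := by
  rw [aR, evalNegOne_qmk]; simp
lemma evalNegOne_bR : evalNegOne bR = 0 := by
  rw [bR, evalNegOne_qmk]; simp

lemma pZe_surj : Function.Surjective pZe := by
  intro n
  refine ⟨qmk (C (eZe n)), ?_⟩
  apply eZe.injective
  rw [pZe_apply, evalOne_qmk, eval_C]

lemma pZo_surj : Function.Surjective pZo := by
  intro n
  refine ⟨qmk (C (eZo n)), ?_⟩
  apply eZo.injective
  rw [pZo_apply, evalNegOne_qmk, eval_C]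

lemma pZe_a (x : Runf) : pZe (cE 0 * x) = 0 := by
  apply eZe.injective
  rw [pZe_apply, map_zero, map_mul, cE_even (Even.zero), evalOne_aR, zero_mul]

lemma pZo_b (x : Runf) : pZo (cO 0 * x) = 0 := by
  apply eZo.injective
  rw [pZo_apply, map_zero, map_mul, cO_even (Even.zero), evalNegOne_bR, zero_mul]

lemma pZe_ker (x : Runf) (hx : pZe x = 0) : ∃ y, cE 0 * y = x := by
  obtain ⟨p, rfl⟩ := Ideal.Quotient.mk_surjective x
  have h0 : p.eval 1 = 0 := by
    have := congrArg eZe hx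
    rw [pZe_apply, map_zero] at this
    exact this
  have hdvd : (X - 1 : ℤ[X]) ∣ p := by
    have := (dvd_iff_isRoot (p := p) (a := (1 : ℤ))).mpr h0
    rwa [← Xsub1] at this
  obtain ⟨q, hq⟩ := hdvd
  refine ⟨qmk q, ?_⟩
  rw [cE_even (Even.zero), aR, ← map_mul, ← hq]
  try rfl

lemma pZo_ker (x : Runf) (hx : pZo x = 0) : ∃ y, cO 0 * y = x := by
  obtain ⟨p, rfl⟩ := Ideal.Quotient.mk_surjective x
  have h0 : p.eval (-1) = 0 := by
    have := congrArg eZo hx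
    rw [pZo_apply, map_zero] at this
    exact this
  have hdvd : (X + 1 : ℤ[X]) ∣ p := by
    have := (dvd_iff_isRoot (p := p) (a := (-1 : ℤ))).mpr h0
    rwa [← Xadd1] at this
  obtain ⟨q, hq⟩ := hdvd
  refine ⟨qmk q, ?_⟩
  rw [cO_even (Even.zero), bR, ← map_mul, ← hq]
  try rfl

/-- Projective resolution of `Ze`. -/
def resolZe : ProjectiveResolution (ModuleCat.of Runf Ze) :=
  resol cE hcE Ze pZe pZe_a hexE pZe_surj pZe_ker

/-- Projective resolution of `Zo`. -/
def resolZo : ProjectiveResolution (ModuleCat.of Runf Zo) :=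
  resol cO hcO Zo pZo pZo_b hexO pZo_surj pZo_ker

lemma huC_evalOne : ∀ n : ℤ, evalOne (qmk (C n)) = n := fun n => by
  rw [evalOne_qmk, eval_C]
lemma huC_evalNegOne : ∀ n : ℤ, evalNegOne (qmk (C n)) = n := fun n => by
  rw [evalNegOne_qmk, eval_C]

/-- `Ext¹(Ze, Zo) ≃+ ZMod 2`. -/
def extEquivEO :
    ((((_root_.Ext Runf (ModuleCat Runf) 1).obj
        (Opposite.op (ModuleCat.of Runf Ze))).obj (ModuleCat.of Runf Zo)) ≃+ ZMod 2) :=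
  ((resolZe.isoExt 1 (ModuleCat.of Runf Zo)).toLinearEquiv.toAddEquiv).trans
    (homologyEquiv cE hcE Zo eZo evalNegOne hu_Zo parity (-2) (Or.inr rfl)
      (by rw [cE_even (Even.zero)]; exact evalNegOne_aR)
      (by rw [cE_odd (by decide)]; exact evalNegOne_bR)
      huC_evalNegOne
      pZo ((pZo_apply (1 : Runf)).trans (map_one evalNegOne)))

/-- `Ext¹(Zo, Ze) ≃+ ZMod 2`. -/
def extEquivOE :
    ((((_root_.Ext Runf (ModuleCat Runf) 1).obj
        (Opposite.op (ModuleCat.of Runf Zo))).obj (ModuleCat.of Runf Ze)) ≃+ ZMod 2) :=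
  ((resolZo.isoExt 1 (ModuleCat.of Runf Ze)).toLinearEquiv.toAddEquiv).trans
    (homologyEquiv cO hcO Ze eZe evalOne hu_Ze (fun _ => rfl) 2 (Or.inl rfl)
      (by rw [cO_even (Even.zero)]; exact evalOne_bR)
      (by rw [cO_odd (by decide)]; exact evalOne_aR)
      huC_evalOne
      pZe ((pZe_apply (1 : Runf)).trans (map_one evalOne)))

end Stmt8Aux

/-- `Ext¹_R(Z_e, Z_o)` and `Ext¹_R(Z_o, Z_e)` are both isomorphic to `ℤ/2ℤ`
as abelian groups. -/
theorem stmt_8 :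
    Nonempty
      ((((_root_.Ext Runf (ModuleCat Runf) 1).obj
          (Opposite.op (ModuleCat.of Runf Ze))).obj (ModuleCat.of Runf Zo)) ≃+ ZMod 2) ∧
    Nonempty
      ((((_root_.Ext Runf (ModuleCat Runf) 1).obj
          (Opposite.op (ModuleCat.of Runf Zo))).obj (ModuleCat.of Runf Ze)) ≃+ ZMod 2) := by
  exact ⟨⟨Stmt8Aux.extEquivEO⟩, ⟨Stmt8Aux.extEquivOE⟩⟩

end
end

section
/- In the category of R-modules, Ext¹_R(Z_e, Z_e) = 0 and Ext¹_R(Z_o, Z_o) = 0. -/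
open Polynomial

noncomputable section

open CategoryTheory


open CategoryTheory Limits

-- basic ring lemmas
lemma Ze_smul (r : Runf) (m : ℤ) : r • (show Ze from m) = show Ze from (evalOne r * m) := rfl
lemma Zo_smul (r : Runf) (m : ℤ) : r • (show Zo from m) = show Zo from (evalNegOne r * m) := rfl

lemma evalOne_mk (p : ℤ[X]) : evalOne (Ideal.Quotient.mk _ p) = eval 1 p := rfl
lemma evalNegOne_mk (p : ℤ[X]) : evalNegOne (Ideal.Quotient.mk _ p) = eval (-1) p := rfl

lemma kerOne_lemma : ∀ x : Runf, evalOne x = 0 → ∃ y, x = (xi - 1) * y := by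
  intro x hx
  obtain ⟨p, rfl⟩ := Ideal.Quotient.mk_surjective x
  rw [evalOne_mk] at hx
  obtain ⟨q, hq⟩ := dvd_iff_isRoot.mpr hx
  refine ⟨Ideal.Quotient.mk _ q, ?_⟩
  rw [hq]
  push_cast [map_mul, map_sub, map_one, xi]
  simp [xi]

lemma kerNegOne_lemma : ∀ x : Runf, evalNegOne x = 0 → ∃ y, x = (xi + 1) * y := by
  intro x hx
  obtain ⟨p, rfl⟩ := Ideal.Quotient.mk_surjective x
  rw [evalNegOne_mk] at hx
  obtain ⟨q, hq⟩ := dvd_iff_isRoot.mpr hx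
  refine ⟨Ideal.Quotient.mk _ q, ?_⟩
  rw [hq]
  have : (X : ℤ[X]) - C (-1) = X + 1 := by rw [map_neg, map_one]; ring
  rw [this, map_mul, map_add, map_one, xi]

lemma xi_sq : xi ^ 2 = (1 : Runf) := by
  have : (Ideal.Quotient.mk (Ideal.span {(X : ℤ[X]) ^ 2 - 1})) ((X:ℤ[X])^2 - 1) = 0 := by
    rw [Ideal.Quotient.eq_zero_iff_mem]
    exact Ideal.subset_span rfl
  have h2 : xi ^ 2 - 1 = (0 : Runf) := by
    simpa [xi, map_sub, map_pow] using this
  linear_combination h2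

lemma ann_lemma (u v : ℤ[X]) (hu : u ≠ 0) (huv : (X:ℤ[X])^2 - 1 = u * v) :
    ∀ x : Runf, (Ideal.Quotient.mk _ u) * x = 0 →
      ∃ y : Runf, x = (Ideal.Quotient.mk _ v) * y := by
  intro x hx
  obtain ⟨p, rfl⟩ := Ideal.Quotient.mk_surjective x
  rw [← map_mul, Ideal.Quotient.eq_zero_iff_mem, Ideal.mem_span_singleton] at hx
  obtain ⟨q, hq⟩ := hx
  refine ⟨Ideal.Quotient.mk _ q, ?_⟩
  rw [← map_mul]
  congr 1
  apply mul_left_cancel₀ hu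
  rw [hq, huv]
  ring



open CategoryTheory Limits

section Generic

variable (a b : Runf)

/-- The alternating multiplier. -/
def cc (n : ℕ) : Runf := if Even n then a else b

lemma cc_mul_succ (hab : a * b = 0) (n : ℕ) : cc a b n * cc a b (n + 1) = 0 := by
  rcases Nat.even_or_odd n with h | h
  · simp [cc, h, Nat.even_add_one, Nat.not_even_iff_odd.mpr h.add_one, hab]
  · simp [cc, Nat.not_even_iff_odd.mpr h, Nat.even_add_one, h, mul_comm b a, hab]

/-- The 2-periodic complex `⋯ ⟶ R ⟶ R ⟶ R`. -/
def res (hab : a * b = 0) : ChainComplex (ModuleCat Runf) ℕ :=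
  ChainComplex.of (fun _ => ModuleCat.of Runf Runf)
    (fun n => ModuleCat.ofHom ((LinearMap.lsmul Runf Runf) (cc a b n)))
    (fun n => by
      ext1
      refine LinearMap.ext fun x => ?_
      show cc a b n • (cc a b (n + 1) • x) = 0
      rw [smul_smul, cc_mul_succ a b hab]
      simp)

variable {N : Type} [AddCommGroup N] [Module Runf N] (n₀ : N)

/-- The augmentation map. -/
def evmap : ModuleCat.of Runf Runf ⟶ ModuleCat.of Runf N :=
  ModuleCat.ofHom (LinearMap.toSpanSingleton Runf N n₀)

lemma d10_ev (hab : a * b = 0) (ha0 : a • n₀ = 0) :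
    (res a b hab).d 1 0 ≫ evmap n₀ = 0 := by
  have hd : (res a b hab).d 1 0 = ModuleCat.ofHom ((LinearMap.lsmul Runf Runf) (cc a b 0)) :=
    ChainComplex.of_d (fun _ => ModuleCat.of Runf Runf) (fun n => ModuleCat.ofHom ((LinearMap.lsmul Runf Runf) (cc a b n))) 0
  rw [hd]
  ext1
  refine LinearMap.ext fun (x : Runf) => ?_
  show (LinearMap.toSpanSingleton Runf N n₀) ((LinearMap.lsmul Runf Runf (cc a b 0)) x) = 0
  have hc0 : cc a b 0 = a := by simp [cc]
  rw [LinearMap.lsmul_apply, LinearMap.toSpanSingleton_apply, hc0, smul_eq_mul, mul_comm,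
    mul_smul, ha0, smul_zero]

lemma res_exactAt (hab : a * b = 0)
    (hanna : ∀ x : Runf, a * x = 0 → ∃ y, x = b * y)
    (hannb : ∀ x : Runf, b * x = 0 → ∃ y, x = a * y) (n : ℕ) :
    (res a b hab).ExactAt (n + 1) := by
  rw [HomologicalComplex.exactAt_iff' _ (n+2) (n+1) n (by simp) (by simp),
    ShortComplex.moduleCat_exact_iff]
  intro x hx
  have hg : (res a b hab).d (n+1) n
      = ModuleCat.ofHom ((LinearMap.lsmul Runf Runf) (cc a b n)) :=
    ChainComplex.of_d (fun _ => ModuleCat.of Runf Runf) (fun n => ModuleCat.ofHom ((LinearMap.lsmul Runf Runf) (cc a b n))) n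
  have hf : (res a b hab).d (n+2) (n+1)
      = ModuleCat.ofHom ((LinearMap.lsmul Runf Runf) (cc a b (n+1))) :=
    ChainComplex.of_d (fun _ => ModuleCat.of Runf Runf) (fun n => ModuleCat.ofHom ((LinearMap.lsmul Runf Runf) (cc a b n))) (n+1)
  have hx' : cc a b n * (show Runf from x) = 0 := by
    simp [HomologicalComplex.sc', hg] at hx; exact hx
  have key : ∃ y : Runf, cc a b (n+1) * y = (show Runf from x) := by
    rcases Nat.even_or_odd n with h | h
    · have hcn : cc a b n = a := by simp [cc, h]
      have hcn1 : cc a b (n+1) = b := by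
        simp [cc, Nat.even_add_one, Nat.not_even_iff_odd.mpr h.add_one]
      obtain ⟨y, hy⟩ := hanna x (by rw [← hcn]; exact hx')
      exact ⟨y, by rw [hcn1, ← hy]⟩
    · have hcn : cc a b n = b := by simp [cc, Nat.not_even_iff_odd.mpr h]
      have hcn1 : cc a b (n+1) = a := by simp [cc, Nat.even_add_one, h]
      obtain ⟨y, hy⟩ := hannb x (by rw [← hcn]; exact hx')
      exact ⟨y, by rw [hcn1, ← hy]⟩
  obtain ⟨y, hy⟩ := key
  refine ⟨y, ?_⟩
  simp [HomologicalComplex.sc', hf]; exact hy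

end Generic


section Generic

variable (a b : Runf) {N : Type} [AddCommGroup N] [Module Runf N] (n₀ : N)

/-- The augmentation chain map to the single complex. -/
def resPi (hab : a * b = 0) (ha0 : a • n₀ = 0) :
    res a b hab ⟶ (ChainComplex.single₀ (ModuleCat Runf)).obj (ModuleCat.of Runf N) :=
  (ChainComplex.toSingle₀Equiv _ _).symm ⟨evmap n₀, d10_ev a b n₀ hab ha0⟩

lemma resPi_f_zero (hab : a * b = 0) (ha0 : a • n₀ = 0) :
    (resPi a b n₀ hab ha0).f 0 = evmap n₀ :=
  ChainComplex.toSingle₀Equiv_symm_apply_f_zero _ _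

def proRes (hab : a * b = 0)
    (hanna : ∀ x : Runf, a * x = 0 → ∃ y, x = b * y)
    (hannb : ∀ x : Runf, b * x = 0 → ∃ y, x = a * y)
    (ha0 : a • n₀ = 0)
    (hker : ∀ x : Runf, x • n₀ = 0 → ∃ y, x = a * y)
    (hsurj : ∀ m : N, ∃ r : Runf, r • n₀ = m) :
    ProjectiveResolution (ModuleCat.of Runf N) where
  complex := res a b hab
  projective n := ModuleCat.projective_of_free
    (M := ModuleCat.of Runf Runf) (Module.Basis.singleton PUnit.{1} Runf)
  π := resPi a b n₀ hab ha0
  quasiIso := ⟨fun n => by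
    have hd10 : (res a b hab).d 1 0
        = ModuleCat.ofHom ((LinearMap.lsmul Runf Runf) a) := by
      have h : (res a b hab).d 1 0
          = ModuleCat.ofHom ((LinearMap.lsmul Runf Runf) (cc a b 0)) :=
        ChainComplex.of_d (fun _ => ModuleCat.of Runf Runf) (fun n => ModuleCat.ofHom ((LinearMap.lsmul Runf Runf) (cc a b n))) 0
      rw [show cc a b 0 = a from by simp [cc]] at h
      exact h
    have w : ModuleCat.ofHom ((LinearMap.lsmul Runf Runf) a) ≫ evmap n₀ = 0 := by
      rw [← hd10]; exact d10_ev a b n₀ hab ha0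
    have hex : (ShortComplex.mk _ _ w).Exact := by
      rw [ShortComplex.moduleCat_exact_iff]
      intro x hx
      obtain ⟨y, hy⟩ := hker (show Runf from x) hx
      refine ⟨y, ?_⟩
      show a • y = x
      rw [smul_eq_mul, ← hy]
    have hepi : Epi (evmap n₀) := by
      rw [ModuleCat.epi_iff_surjective]
      intro m
      obtain ⟨r, hr⟩ := hsurj m
      exact ⟨r, hr⟩
    cases n with
    | zero =>
      rw [ChainComplex.quasiIsoAt₀_iff, ShortComplex.quasiIso_iff_of_zeros']
      · refine (ShortComplex.exact_and_epi_g_iff_of_iso ?_).2 ⟨hex, hepi⟩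
        refine ShortComplex.isoMk (Iso.refl _) (Iso.refl _) (Iso.refl _) ?_ ?_
        · dsimp
          erw [Category.id_comp]
        · dsimp
          erw [Category.id_comp]
      all_goals rfl
    | succ n =>
      rw [quasiIsoAt_iff_exactAt']
      · exact res_exactAt a b hab hanna hannb n
      · apply ChainComplex.exactAt_succ_single_obj⟩

end Generic

section Generic2

variable (a b : Runf) {N : Type} [AddCommGroup N] [Module Runf N] (n₀ : N)

lemma homcx_exactAt_one (hab : a * b = 0)
    (hbreg : ∀ m : N, b • m = 0 → m = 0) :
    ((res a b hab).linearYonedaObj Runf (ModuleCat.of Runf N)).ExactAt 1 := by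
  rw [HomologicalComplex.exactAt_iff' _ 0 1 2 (by simp) (by simp),
    ShortComplex.moduleCat_exact_iff]
  intro f hf
  let fm : (res a b hab).X 1 ⟶ ModuleCat.of Runf N := f
  have hfm : fm = f := rfl
  have hd21 : (res a b hab).d 2 1
      = ModuleCat.ofHom ((LinearMap.lsmul Runf Runf) (cc a b 1)) :=
    ChainComplex.of_d (fun _ => ModuleCat.of Runf Runf) (fun n => ModuleCat.ofHom ((LinearMap.lsmul Runf Runf) (cc a b n))) 1
  have hg : ((((res a b hab).linearYonedaObj Runf (ModuleCat.of Runf N)).sc' 0 1 2)).g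
      = (((res a b hab).linearYonedaObj Runf (ModuleCat.of Runf N)).d 1 2 : _) := rfl
  rw [hg, ChainComplex.linearYonedaObj_d] at hf
  have hf' : (res a b hab).d 2 1 ≫ fm = 0 := by
    rw [hfm]
    exact hf
  replace hf' := congrArg ModuleCat.Hom.hom hf'
  rw [ModuleCat.hom_comp, ModuleCat.hom_zero] at hf'
  have h1 := LinearMap.congr_fun hf' (show ((res a b hab).X 2 : Type) from (1 : Runf))
  simp only [LinearMap.comp_apply, LinearMap.zero_apply] at h1
  rw [hd21] at h1
  have h2 : fm ((cc a b 1 : Runf) • (1 : Runf)) = 0 := h1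
  have hcc1 : cc a b 1 = b := by simp [cc]
  rw [hcc1] at h2
  have h3 : b • fm ((1 : Runf) : ((res a b hab).X 1 : Type)) = 0 := by
    exact (map_smul fm.hom b (1 : Runf)).symm.trans h2
  have hfone : fm ((1 : Runf) : ((res a b hab).X 1 : Type)) = 0 := hbreg _ h3
  have hfzero : fm = 0 := by
    ext1
    refine LinearMap.ext fun (x : Runf) => ?_
    have h4 : fm ((show Runf from x) • (1 : Runf)) = 0 := by
      exact (map_smul fm.hom x (1 : Runf)).trans (by erw [hfone, smul_zero])
    have h5 : ((show Runf from x) • (1 : Runf) : Runf) = show Runf from x := by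
      rw [smul_eq_mul, mul_one]
    rw [h5] at h4
    exact h4
  refine ⟨0, ?_⟩
  rw [map_zero, ← hfm]
  exact hfzero.symm

lemma ext_one_subsingleton (hab : a * b = 0)
    (hanna : ∀ x : Runf, a * x = 0 → ∃ y, x = b * y)
    (hannb : ∀ x : Runf, b * x = 0 → ∃ y, x = a * y)
    (ha0 : a • n₀ = 0)
    (hker : ∀ x : Runf, x • n₀ = 0 → ∃ y, x = a * y)
    (hsurj : ∀ m : N, ∃ r : Runf, r • n₀ = m)
    (hbreg : ∀ m : N, b • m = 0 → m = 0) :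
    Subsingleton (((Ext Runf (ModuleCat Runf) 1).obj
      (Opposite.op (ModuleCat.of Runf N))).obj (ModuleCat.of Runf N)) := by
  have hiso := (proRes a b n₀ hab hanna hannb ha0 hker hsurj).isoExt
    (R := Runf) 1 (ModuleCat.of Runf N)
  have hz : IsZero (((res a b hab).linearYonedaObj Runf (ModuleCat.of Runf N)).homology 1) :=
    (HomologicalComplex.exactAt_iff_isZero_homology _ 1).mp
      (homcx_exactAt_one a b hab hbreg)
  have hz2 : IsZero (((Ext Runf (ModuleCat Runf) 1).obj
      (Opposite.op (ModuleCat.of Runf N))).obj (ModuleCat.of Runf N)) :=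
    hz.of_iso hiso
  refine ⟨fun x y => ?_⟩
  let M := ((Ext Runf (ModuleCat Runf) 1).obj
      (Opposite.op (ModuleCat.of Runf N))).obj (ModuleCat.of Runf N)
  have h0 : 𝟙 M = (0 : M ⟶ M) := hz2.eq_of_src _ _
  have key : ∀ z : M, z = 0 := fun z => by
    have h1 : (𝟙 M) z = (0 : M ⟶ M) z := by rw [h0]
    have h2 : (0 : M ⟶ M) z = 0 := LinearMap.zero_apply z
    rw [ModuleCat.id_apply] at h1
    rw [h1, h2]
  rw [key x, key y]

end Generic2


lemma mk_X_sub_one : (Ideal.Quotient.mk (Ideal.span {(X : ℤ[X]) ^ 2 - 1})) ((X : ℤ[X]) - 1)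
    = xi - 1 := by rw [map_sub, map_one]; rfl

lemma mk_X_add_one : (Ideal.Quotient.mk (Ideal.span {(X : ℤ[X]) ^ 2 - 1})) ((X : ℤ[X]) + 1)
    = xi + 1 := by rw [map_add, map_one]; rfl

lemma X_sub_one_ne : ((X : ℤ[X]) - 1) ≠ 0 := by
  intro h
  have := congrArg (eval 0) h
  simp at this

lemma X_add_one_ne : ((X : ℤ[X]) + 1) ≠ 0 := by
  intro h
  have := congrArg (eval 0) h
  simp at this

lemma hab_e : (xi - 1) * (xi + 1) = 0 := by linear_combination xi_sq

lemma hanna_e : ∀ x : Runf, (xi - 1) * x = 0 → ∃ y, x = (xi + 1) * y := by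
  intro x hx
  have := ann_lemma ((X : ℤ[X]) - 1) ((X : ℤ[X]) + 1) X_sub_one_ne (by ring) x
    (by rw [mk_X_sub_one]; exact hx)
  rwa [mk_X_add_one] at this

lemma hannb_e : ∀ x : Runf, (xi + 1) * x = 0 → ∃ y, x = (xi - 1) * y := by
  intro x hx
  have := ann_lemma ((X : ℤ[X]) + 1) ((X : ℤ[X]) - 1) X_add_one_ne (by ring) x
    (by rw [mk_X_add_one]; exact hx)
  rwa [mk_X_sub_one] at this

lemma evalOne_xi : evalOne xi = 1 := by
  have := evalOne_mk X
  simpa [xi] using this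

lemma evalNegOne_xi : evalNegOne xi = -1 := by
  have := evalNegOne_mk X
  simpa [xi] using this

theorem ext_Ze : Subsingleton (((Ext Runf (ModuleCat Runf) 1).obj
    (Opposite.op (ModuleCat.of Runf Ze))).obj (ModuleCat.of Runf Ze)) := by
  refine ext_one_subsingleton (xi - 1) (xi + 1) (show Ze from (1 : ℤ)) hab_e hanna_e hannb_e
    ?_ ?_ ?_ ?_
  · rw [Ze_smul]
    show (evalOne (xi - 1) * 1 : ℤ) = (0 : ℤ)
    rw [map_sub, map_one, evalOne_xi]
    ring
  · intro x hx
    apply kerOne_lemma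
    have h1 : (show Ze from (evalOne x * 1 : ℤ)) = 0 := by rw [← Ze_smul]; exact hx
    have h2 : (evalOne x * 1 : ℤ) = 0 := h1
    simpa using h2
  · intro m
    refine ⟨Ideal.Quotient.mk _ (C (show ℤ from m)), ?_⟩
    rw [Ze_smul]
    show (evalOne (Ideal.Quotient.mk _ (C (show ℤ from m))) * 1 : ℤ) = (show ℤ from m)
    rw [evalOne_mk]
    simp only [mul_one]; exact Polynomial.eval_C
  · intro m hm
    have h1 : (show Ze from (evalOne (xi + 1) * (show ℤ from m) : ℤ)) = 0 := by
      rw [← Ze_smul]; exact hm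
    have h2 : (evalOne (xi + 1) * (show ℤ from m) : ℤ) = 0 := h1
    rw [map_add, map_one, evalOne_xi] at h2
    show (show ℤ from m) = (0 : ℤ)
    omega

theorem ext_Zo : Subsingleton (((Ext Runf (ModuleCat Runf) 1).obj
    (Opposite.op (ModuleCat.of Runf Zo))).obj (ModuleCat.of Runf Zo)) := by
  refine ext_one_subsingleton (xi + 1) (xi - 1) (show Zo from (1 : ℤ))
    (by linear_combination xi_sq) hannb_e hanna_e ?_ ?_ ?_ ?_
  · rw [Zo_smul]
    show (evalNegOne (xi + 1) * 1 : ℤ) = (0 : ℤ)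
    rw [map_add, map_one, evalNegOne_xi]
    ring
  · intro x hx
    apply kerNegOne_lemma
    have h1 : (show Zo from (evalNegOne x * 1 : ℤ)) = 0 := by rw [← Zo_smul]; exact hx
    have h2 : (evalNegOne x * 1 : ℤ) = 0 := h1
    simpa using h2
  · intro m
    refine ⟨Ideal.Quotient.mk _ (C (show ℤ from m)), ?_⟩
    rw [Zo_smul]
    show (evalNegOne (Ideal.Quotient.mk _ (C (show ℤ from m))) * 1 : ℤ) = (show ℤ from m)
    rw [evalNegOne_mk]
    simp only [mul_one]; exact Polynomial.eval_C
  · intro m hm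
    have h1 : (show Zo from (evalNegOne (xi - 1) * (show ℤ from m) : ℤ)) = 0 := by
      rw [← Zo_smul]; exact hm
    have h2 : (evalNegOne (xi - 1) * (show ℤ from m) : ℤ) = 0 := h1
    rw [map_sub, map_one, evalNegOne_xi] at h2
    show (show ℤ from m) = (0 : ℤ)
    omega


/-- `Ext¹_R(Z_e, Z_e) = 0` and `Ext¹_R(Z_o, Z_o) = 0`. -/
theorem stmt_9 :
    Subsingleton
      ((((_root_.Ext Runf (ModuleCat Runf) 1).obj
          (Opposite.op (ModuleCat.of Runf Ze))).obj (ModuleCat.of Runf Ze))) ∧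
    Subsingleton
      ((((_root_.Ext Runf (ModuleCat Runf) 1).obj
          (Opposite.op (ModuleCat.of Runf Zo))).obj (ModuleCat.of Runf Zo))) :=
  ⟨ext_Ze, ext_Zo⟩

end
end

section
/- Let 0 → B →ⁱ P →ᵖ A → 0 be a degreewise short exact sequence of cochain complexes of abelian groups, and suppose there exists a chain map r : P → B with r ∘ i = 2·id_B. Then the connecting homomorphism δ : Hⁿ(A) → Hⁿ⁺¹(B) of the associated long exact cohomology sequence satisfies 2δ = 0, i.e., every element in the image of δ is annihilated by 2. -/
open CategoryTheory

/-- Let `0 → B →ⁱ P →ᵖ A → 0` be a (degreewise) short exact sequence of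
cochain complexes of abelian groups, encoded as a short exact short complex `S` with
`B = S.X₁`, `P = S.X₂`, `A = S.X₃`, `i = S.f`, `p = S.g`. If there is a chain map
`r : P → B` with `r ∘ i = 2·id_B`, then the connecting homomorphism
`δ : Hⁿ(A) → Hⁿ⁺¹(B)` of the associated long exact cohomology sequence satisfies
`2·δ = 0`, i.e. every element of the image of `δ` is annihilated by `2`. -/
theorem stmt_14 (S : ShortComplex (CochainComplex AddCommGrpCat ℤ))
    (hS : S.ShortExact) (r : S.X₂ ⟶ S.X₁)
    (hr : S.f ≫ r = (2 : ℤ) • 𝟙 S.X₁) (n : ℤ) :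
    (2 : ℤ) • hS.δ n (n + 1) rfl = 0 := by
  have h : hS.δ n (n+1) rfl ≫ HomologicalComplex.homologyMap (S.f ≫ r) (n+1) = 0 := by
    rw [HomologicalComplex.homologyMap_comp, ← Category.assoc, hS.δ_comp n (n+1) rfl, Limits.zero_comp]
  rw [hr] at h
  rw [show HomologicalComplex.homologyMap ((2:ℤ) • 𝟙 S.X₁) (n+1)
      = (2:ℤ) • 𝟙 _ from ?_] at h
  · simpa using h
  · rw [show ((2:ℤ) • 𝟙 S.X₁) = 𝟙 S.X₁ + 𝟙 S.X₁ by simp [two_smul],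
      HomologicalComplex.homologyMap_add, HomologicalComplex.homologyMap_id, two_smul]
end

section
/- Let (Cⁿ)ₙ be a sequence of free abelian groups equipped with two families of homomorphisms d_e, d_o : Cⁿ → Cⁿ⁺¹, each satisfying d∘d = 0, such that d_e x − d_o x ∈ 2Cⁿ⁺¹ for every x ∈ Cⁿ. Define Pⁿ := {(x,y) ∈ Cⁿ × Cⁿ : x − y ∈ 2Cⁿ} with differential (x,y) ↦ (d_e x, d_o y). Then P is a cochain complex, the maps i : y ↦ (0, 2y) and p : (x,y) ↦ x form a degreewise short exact sequence of cochain complexes 0 → (C, d_o) →ⁱ P →ᵖ (C, d_e) → 0, and the connecting homomorphism δ : Hⁿ(C, d_e) → Hⁿ⁺¹(C, d_o) sends the class of any cocycle x (i.e., d_e x = 0) to the class of the unique element z with 2z = d_o x. -/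
open CategoryTheory

noncomputable section

variable (C : ℤ → Type) [∀ n, AddCommGroup (C n)]
  (dE dO : ∀ n, C n →+ C (n + 1))
  (hdE : ∀ n x, dE (n + 1) (dE n x) = 0) (hdO : ∀ n x, dO (n + 1) (dO n x) = 0)
  (hpar : ∀ n (x : C n), ∃ w, dE n x - dO n x = (2 : ℤ) • w)

/-- The cochain complex (of abelian groups = `ℤ`-modules) with components `Cⁿ` and
differential `d`. -/
def cpxOf (d : ∀ n, C n →+ C (n + 1)) (hd : ∀ n x, d (n + 1) (d n x) = 0) :
    CochainComplex (ModuleCat ℤ) ℤ :=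
  CochainComplex.of (fun n => ModuleCat.of ℤ (C n))
    (fun n => ModuleCat.ofHom (d n).toIntLinearMap)
    (fun n => by
      apply ModuleCat.hom_ext
      apply LinearMap.ext
      intro x
      simpa using hd n x)

/-- `Pⁿ = {(x,y) ∈ Cⁿ × Cⁿ : x − y ∈ 2Cⁿ}`. -/
def pullSub (n : ℤ) : Submodule ℤ (C n × C n) where
  carrier := {p | ∃ z, p.1 - p.2 = (2 : ℤ) • z}
  zero_mem' := ⟨0, by simp⟩
  add_mem' := by
    intro a b ⟨z, hz⟩ ⟨w, hw⟩
    refine ⟨z + w, ?_⟩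
    have h : (a + b).1 - (a + b).2 = (a.1 - a.2) + (b.1 - b.2) := by
      simp only [Prod.fst_add, Prod.snd_add]; abel
    rw [h, hz, hw, smul_add]
  smul_mem' := by
    intro c a ⟨z, hz⟩
    refine ⟨c • z, ?_⟩
    have h : (c • a).1 - (c • a).2 = c • (a.1 - a.2) := by
      simp only [Prod.smul_fst, Prod.smul_snd, smul_sub]
    rw [h, hz, smul_comm]

/-- The differential `(x,y) ↦ (d_e x, d_o y)` on `P`. -/
def pullD (n : ℤ) : pullSub C n →ₗ[ℤ] pullSub C (n + 1) :=
  LinearMap.restrict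
    (LinearMap.prodMap (dE n).toIntLinearMap (dO n).toIntLinearMap)
    (p := pullSub C n) (q := pullSub C (n + 1)) (fun p hp => by
      obtain ⟨z, hz⟩ := hp
      obtain ⟨w, hw⟩ := hpar n p.1
      refine ⟨w + dO n z, ?_⟩
      show dE n p.1 - dO n p.2 = _
      have h : dE n p.1 - dO n p.2 = (dE n p.1 - dO n p.1) + (dO n p.1 - dO n p.2) := by
        abel
      rw [h, hw, ← map_sub, hz, map_zsmul, ← smul_add])

/-- The pullback complex `P` with components `Pⁿ` and differential `(x,y) ↦ (d_e x, d_o y)`. -/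
def pullCpx : CochainComplex (ModuleCat ℤ) ℤ :=
  CochainComplex.of (fun n => ModuleCat.of ℤ (pullSub C n))
    (fun n => ModuleCat.ofHom (pullD C dE dO hpar n))
    (fun n => by
      apply ModuleCat.hom_ext
      apply LinearMap.ext
      intro p
      refine Subtype.ext (Prod.ext ?_ ?_)
      · show dE (n + 1) (dE n p.1.1) = _
        simp [hdE n p.1.1]
      · show dO (n + 1) (dO n p.1.2) = _
        simp [hdO n p.1.2])

/-- The chain map `i : (C, d_o) → P`, `y ↦ (0, 2y)`. -/
def pullI : cpxOf C dO hdO ⟶ pullCpx C dE dO hdE hdO hpar :=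
  CochainComplex.ofHom
    (fun n => ModuleCat.ofHom (LinearMap.codRestrict (pullSub C n)
      (LinearMap.prod 0 ((2 : ℤ) • LinearMap.id))
      (fun y => ⟨-y, by
        show (0 : C n) - (2 : ℤ) • y = (2 : ℤ) • (-y)
        rw [zero_sub, smul_neg]⟩)))
    (fun n => by
      apply ModuleCat.hom_ext
      apply LinearMap.ext
      intro y
      simp only [cpxOf, pullCpx, CochainComplex.of_d]
      refine Subtype.ext (Prod.ext ?_ ?_)
      · show dE n 0 = (0 : C n →ₗ[ℤ] C (n + 1)) y
        simp
        rfl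
      · show dO n ((2 : ℤ) • y) = (2 : ℤ) • dO n y
        exact map_zsmul (dO n) 2 y)

/-- The chain map `p : P → (C, d_e)`, `(x,y) ↦ x`. -/
def pullP : pullCpx C dE dO hdE hdO hpar ⟶ cpxOf C dE hdE :=
  CochainComplex.ofHom
    (fun n => ModuleCat.ofHom
      ((LinearMap.fst ℤ (C n) (C n)).comp (pullSub C n).subtype))
    (fun n => by
      apply ModuleCat.hom_ext
      apply LinearMap.ext
      intro p
      simp only [cpxOf, pullCpx, CochainComplex.of_d]
      rfl)

/-- The short complex `(C, d_o) →ⁱ P →ᵖ (C, d_e)`. -/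
def pullSeq : ShortComplex (CochainComplex (ModuleCat ℤ) ℤ) :=
  ShortComplex.mk (pullI C dE dO hdE hdO hpar) (pullP C dE dO hdE hdO hpar) (by
    apply HomologicalComplex.hom_ext
    intro n
    apply ModuleCat.hom_ext
    apply LinearMap.ext
    intro y
    rfl)

/-- Let `(Cⁿ)` be a sequence of free abelian groups with two differentials
`d_e`, `d_o` (each squaring to zero) that agree modulo `2`. Let
`Pⁿ = {(x,y) : x − y ∈ 2Cⁿ}` with differential `(x,y) ↦ (d_e x, d_o y)`. Then `P` is a
cochain complex (by construction above), the maps `i : y ↦ (0,2y)` and `p : (x,y) ↦ x`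
form a degreewise short exact sequence of cochain complexes
`0 → (C,d_o) →ⁱ P →ᵖ (C,d_e) → 0`, and its connecting homomorphism
`δ : Hⁿ(C,d_e) → Hⁿ⁺¹(C,d_o)` sends the class of any cocycle `x` (`d_e x = 0`) to the
class of the (unique, by freeness) element `z` with `2z = d_o x`. -/
theorem stmt_15 [∀ n, Module.Free ℤ (C n)] :
    (∀ n : ℤ, ((pullSeq C dE dO hdE hdO hpar).map
        (HomologicalComplex.eval (ModuleCat ℤ) (ComplexShape.up ℤ) n)).ShortExact) ∧
    (∃ hS : (pullSeq C dE dO hdE hdO hpar).ShortExact,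
      ∀ (n : ℤ) (x : C n), dE n x = 0 → ∀ (z : C (n + 1)), (2 : ℤ) • z = dO n x →
        ∀ (hxc : (forget₂ (ModuleCat ℤ) Ab).map
              ((pullSeq C dE dO hdE hdO hpar).X₃.d n (n + 1)) x = 0)
          (hzc : (forget₂ (ModuleCat ℤ) Ab).map
              ((pullSeq C dE dO hdE hdO hpar).X₁.d (n + 1) (n + 1 + 1)) z = 0),
        (forget₂ (ModuleCat ℤ) Ab).map (hS.δ n (n + 1) rfl)
          ((forget₂ (ModuleCat ℤ) Ab).map
              ((pullSeq C dE dO hdE hdO hpar).X₃.homologyπ n)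
            ((pullSeq C dE dO hdE hdO hpar).X₃.cyclesMk x (n + 1) (by simp) hxc)) =
        (forget₂ (ModuleCat ℤ) Ab).map
            ((pullSeq C dE dO hdE hdO hpar).X₁.homologyπ (n + 1))
          ((pullSeq C dE dO hdE hdO hpar).X₁.cyclesMk z (n + 1 + 1) (by simp) hzc)) := by
  have hdeg : ∀ n : ℤ, ((pullSeq C dE dO hdE hdO hpar).map
      (HomologicalComplex.eval (ModuleCat ℤ) (ComplexShape.up ℤ) n)).ShortExact := by
    intro n
    refine ShortComplex.ShortExact.mk' ?_ ?_ ?_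
    · rw [ShortComplex.moduleCat_exact_iff]
      intro p hp
      obtain ⟨⟨p1, p2⟩, w, hw⟩ := p
      have h1 : p1 = 0 := hp
      refine ⟨-w, Subtype.ext (Prod.ext ?_ ?_)⟩
      · exact h1.symm
      · show (2 : ℤ) • (-w) = p2
        rw [smul_neg, ← hw, h1, zero_sub, neg_neg]
    · rw [ModuleCat.mono_iff_injective]
      intro a b hab
      have h2 : (2 : ℤ) • a = (2 : ℤ) • b :=
        congrArg (fun q : pullSub C n => (Subtype.val q).2) hab
      exact smul_right_injective (C n) (by norm_num) h2
    · rw [ModuleCat.epi_iff_surjective]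
      intro x
      exact ⟨⟨(x, x), ⟨0, by rw [smul_zero]; exact sub_self (G := C n) x⟩⟩, rfl⟩
  have hS : (pullSeq C dE dO hdE hdO hpar).ShortExact :=
    HomologicalComplex.shortExact_of_degreewise_shortExact _ hdeg
  refine ⟨hdeg, hS, ?_⟩
  intro n x hx z hz hxc hzc
  set x₂ : pullSub C n := ⟨(x, x), ⟨0, by simp⟩⟩ with hx₂def
  have hd : ((pullCpx C dE dO hdE hdO hpar).d n (n + 1)) x₂
      = pullD C dE dO hpar n x₂ :=
    by simp only [pullCpx, CochainComplex.of_d]; rfl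
  have hx₁ : (pullI C dE dO hdE hdO hpar).f (n + 1) z
      = ((pullCpx C dE dO hdE hdO hpar).d n (n + 1)) x₂ := by
    rw [hd]
    exact Subtype.ext (Prod.ext hx.symm hz)
  exact hS.δ_apply n (n + 1) rfl x hxc x₂ rfl z hx₁ (n + 1 + 1) (by simp)

end
end
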